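/- Let $f$ be a finite-valued normal convex integrand and $P\ll\mathbb{P}$ a probability measure. Suppose there exists $Y\in L^1(\mathbb{P})$ with $\tilde f(\cdot,Y,dP/d\mathbb{P})^+\in L^1(\mathbb{P})$, where $\tilde f(\omega,y,z)=\sup_x(xy-zf(\omega,x))$. Then the functional $X\mapsto E_P[f(\cdot,X)]$ is a proper, convex, lower semicontinuous function on $L^\infty(\mathbb{P})$ with respect to the norm topology, provided additionally $E_P[f(\cdot,X_0)^+]<\infty$ for some $X_0\in L^\infty$. -/

import Mathlib

open MeasureTheory ENNReal Filter Topology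

namespace IFPCL

lemma ofReal_max_zero (u : ℝ) : ENNReal.ofReal (max u 0) = ENNReal.ofReal u := by
  rcases le_total u 0 with h | h
  · rw [max_eq_right h, ENNReal.ofReal_zero, eq_comm, ENNReal.ofReal_eq_zero]
    exact h
  · rw [max_eq_left h]

lemma aemeas_comp {Ω : Type*} [MeasurableSpace Ω] {μ : Measure Ω} {f : Ω → ℝ → ℝ}
    (hmeas : Measurable (fun p : Ω × ℝ => f p.1 p.2)) {X : Ω → ℝ} (hX : AEMeasurable X μ) :
    AEMeasurable (fun ω => f ω (X ω)) μ := by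
  refine ⟨fun ω => f ω (hX.mk X ω), hmeas.comp (measurable_id.prodMk hX.measurable_mk), ?_⟩
  filter_upwards [hX.ae_eq_mk] with ω h
  rw [h]

lemma coe_ennreal_eq {a : ℝ≥0∞} (ha : a ≠ ⊤) : (a : EReal) = ((a.toReal : ℝ) : EReal) := by
  conv_lhs => rw [← ENNReal.ofReal_toReal ha]
  rw [EReal.coe_ennreal_ofReal, max_eq_left ENNReal.toReal_nonneg]

lemma bot_lt_sub {a b : ℝ≥0∞} (hb : b ≠ ⊤) : (⊥ : EReal) < (a : EReal) - (b : EReal) := by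
  rw [coe_ennreal_eq hb]
  by_cases ha : a = ⊤
  · rw [ha, EReal.coe_ennreal_top, EReal.top_sub_coe]
    exact bot_lt_top
  · rw [coe_ennreal_eq ha, ← EReal.coe_sub]
    exact EReal.bot_lt_coe _

lemma sub_lt_top' {a b : ℝ≥0∞} (ha : a ≠ ⊤) : (a : EReal) - (b : EReal) < ⊤ := by
  have h1 : (a : EReal) - (b : EReal) ≤ (a : EReal) - (0 : EReal) :=
    EReal.sub_le_sub le_rfl (EReal.coe_ennreal_nonneg b)
  have h2 : (a : EReal) - (0 : EReal) = (a : EReal) := by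
    rw [sub_zero]
  rw [h2] at h1
  refine lt_of_le_of_lt h1 ?_
  rw [coe_ennreal_eq ha]
  exact EReal.coe_lt_top _

lemma aux_cancel {A S B H : ℝ≥0∞} (hB : B ≠ ⊤) (hH : H ≠ ⊤) (heq : S + B = A + H) :
    (A : EReal) - B = (S : EReal) - H := by
  by_cases hA : A = ⊤
  · have hS : S = ⊤ := by
      by_contra hS
      exact ENNReal.add_ne_top.mpr ⟨hS, hB⟩ (heq.trans (by rw [hA, top_add]))
    rw [hA, hS, EReal.coe_ennreal_top, coe_ennreal_eq hB, coe_ennreal_eq hH,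
      EReal.top_sub_coe, EReal.top_sub_coe]
  · have hS : S ≠ ⊤ := by
      intro hS
      rw [hS, top_add] at heq
      rcases ENNReal.add_eq_top.mp heq.symm with h | h
      · exact hA h
      · exact hH h
    have h1 : S.toReal + B.toReal = A.toReal + H.toReal := by
      rw [← ENNReal.toReal_add hS hB, ← ENNReal.toReal_add hA hH, heq]
    rw [coe_ennreal_eq hA, coe_ennreal_eq hB, coe_ennreal_eq hS, coe_ennreal_eq hH,
      ← EReal.coe_sub, ← EReal.coe_sub]
    norm_cast
    linarith

lemma lt_sub_real {x : EReal} {c r : ℝ} (h : ((r + c : ℝ) : EReal) < x) :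
    (r : EReal) < x - (c : ℝ) := by
  rw [EReal.lt_sub_iff_add_lt (Or.inl (EReal.coe_ne_bot c)) (Or.inl (EReal.coe_ne_top c))]
  rwa [← EReal.coe_add]

lemma mul_ne_bot_of_pos {b : ℝ} (hb : 0 < b) {v : EReal} (hv : v ≠ ⊥) : (b : EReal) * v ≠ ⊥ := by
  induction v with
  | bot => exact absurd rfl hv
  | coe r => rw [← EReal.coe_mul]; exact EReal.coe_ne_bot _
  | top => rw [EReal.coe_mul_top_of_pos hb]; simp

lemma integrable_of_parts {Ω : Type*} [MeasurableSpace Ω] {P : Measure Ω} {φ : Ω → ℝ}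
    (hφ : AEMeasurable φ P) (h1 : ∫⁻ ω, ENNReal.ofReal (φ ω) ∂P ≠ ⊤)
    (h2 : ∫⁻ ω, ENNReal.ofReal (-(φ ω)) ∂P ≠ ⊤) : Integrable φ P := by
  refine ⟨hφ.aestronglyMeasurable, ?_⟩
  have heq : ∀ ω, (‖φ ω‖₊ : ℝ≥0∞) = ENNReal.ofReal (φ ω) + ENNReal.ofReal (-(φ ω)) := by
    intro ω
    rcases le_total 0 (φ ω) with h | h
    · rw [← enorm_eq_nnnorm, Real.enorm_eq_ofReal h, ENNReal.ofReal_of_nonpos (neg_nonpos.mpr h), add_zero]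
    · rw [← nnnorm_neg, ← enorm_eq_nnnorm, Real.enorm_eq_ofReal (neg_nonneg.mpr h),
        ENNReal.ofReal_of_nonpos h, zero_add]
  have hfin : ∫⁻ ω, (‖φ ω‖₊ : ℝ≥0∞) ∂P < ⊤ := by
    calc ∫⁻ ω, (‖φ ω‖₊ : ℝ≥0∞) ∂P
        = ∫⁻ ω, (ENNReal.ofReal (φ ω) + ENNReal.ofReal (-(φ ω))) ∂P :=
          lintegral_congr fun ω => heq ω
      _ = (∫⁻ ω, ENNReal.ofReal (φ ω) ∂P) + ∫⁻ ω, ENNReal.ofReal (-(φ ω)) ∂P :=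
          lintegral_add_left' (ENNReal.measurable_ofReal.comp_aemeasurable hφ) _
      _ < ⊤ := ENNReal.add_lt_top.mpr ⟨h1.lt_top, h2.lt_top⟩
  exact hfin

lemma F_eq_integral {Ω : Type*} [MeasurableSpace Ω] {P : Measure Ω} {φ : Ω → ℝ}
    (hφ : Integrable φ P) :
    ((∫⁻ ω, ENNReal.ofReal (φ ω) ∂P : ℝ≥0∞) : EReal)
      - ((∫⁻ ω, ENNReal.ofReal (-(φ ω)) ∂P : ℝ≥0∞) : EReal)
    = ((∫ ω, φ ω ∂P : ℝ) : EReal) := by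
  have h1 : ∫⁻ ω, ENNReal.ofReal (φ ω) ∂P ≠ ⊤ := hφ.lintegral_lt_top.ne
  have h2 : ∫⁻ ω, ENNReal.ofReal (-(φ ω)) ∂P ≠ ⊤ := by
    have := hφ.neg.lintegral_lt_top
    simpa using this.ne
  rw [coe_ennreal_eq h1, coe_ennreal_eq h2, ← EReal.coe_sub,
    integral_eq_lintegral_pos_part_sub_lintegral_neg_part hφ]

lemma split_identity {Ω : Type*} [MeasurableSpace Ω] {μ : Measure Ω} {φ h : Ω → ℝ}
    (hφ : AEMeasurable φ μ) (hh : Integrable h μ) (hh0 : ∀ᵐ ω ∂μ, 0 ≤ h ω)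
    (hpos : ∀ᵐ ω ∂μ, -(h ω) ≤ φ ω) :
    ((∫⁻ ω, ENNReal.ofReal (φ ω) ∂μ : ℝ≥0∞) : EReal)
      - ((∫⁻ ω, ENNReal.ofReal (-(φ ω)) ∂μ : ℝ≥0∞) : EReal)
    = ((∫⁻ ω, ENNReal.ofReal (φ ω + h ω) ∂μ : ℝ≥0∞) : EReal)
      - ((∫⁻ ω, ENNReal.ofReal (h ω) ∂μ : ℝ≥0∞) : EReal) := by
  have hB : ∫⁻ ω, ENNReal.ofReal (-(φ ω)) ∂μ ≠ ⊤ := by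
    refine ne_top_of_le_ne_top hh.lintegral_lt_top.ne (lintegral_mono_ae ?_)
    filter_upwards [hpos] with ω h1
    exact ENNReal.ofReal_le_ofReal (by linarith)
  have hH : ∫⁻ ω, ENNReal.ofReal (h ω) ∂μ ≠ ⊤ := hh.lintegral_lt_top.ne
  refine aux_cancel hB hH ?_
  have hpt : ∀ᵐ ω ∂μ, ENNReal.ofReal (φ ω + h ω) + ENNReal.ofReal (-(φ ω))
      = ENNReal.ofReal (φ ω) + ENNReal.ofReal (h ω) := by
    filter_upwards [hh0, hpos] with ω h0 h1
    rcases le_total 0 (φ ω) with h2 | h2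
    · rw [ENNReal.ofReal_of_nonpos (neg_nonpos.mpr h2), add_zero, ENNReal.ofReal_add h2 h0]
    · rw [← ENNReal.ofReal_add (by linarith) (neg_nonneg.mpr h2), ENNReal.ofReal_of_nonpos h2,
        zero_add]
      congr 1
      ring
  calc (∫⁻ ω, ENNReal.ofReal (φ ω + h ω) ∂μ) + ∫⁻ ω, ENNReal.ofReal (-(φ ω)) ∂μ
      = ∫⁻ ω, (ENNReal.ofReal (φ ω + h ω) + ENNReal.ofReal (-(φ ω))) ∂μ :=
        (lintegral_add_left'
          (ENNReal.measurable_ofReal.comp_aemeasurable (hφ.add hh.1.aemeasurable)) _).symm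
    _ = ∫⁻ ω, (ENNReal.ofReal (φ ω) + ENNReal.ofReal (h ω)) ∂μ := lintegral_congr_ae hpt
    _ = (∫⁻ ω, ENNReal.ofReal (φ ω) ∂μ) + ∫⁻ ω, ENNReal.ofReal (h ω) ∂μ :=
        lintegral_add_left' (ENNReal.measurable_ofReal.comp_aemeasurable hφ) _

end IFPCL

open IFPCL

set_option maxHeartbeats 1000000 in
set_option synthInstance.maxHeartbeats 1000000 in
/-- Under the dual integrability condition, the integral functional
`X ↦ E_P[f(·,X)]` is a proper convex norm-lower-semicontinuous function on
`L^∞`. -/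
theorem integral_functional_proper_convex_lsc {Ω : Type*} [MeasurableSpace Ω]
    (μ : Measure Ω) [IsProbabilityMeasure μ] [SigmaFinite μ]
    (P : Measure Ω) [IsProbabilityMeasure P] (hac : P ≪ μ)
    (f : Ω → ℝ → ℝ)
    (hmeas : Measurable (fun p : Ω × ℝ => f p.1 p.2))
    (hconv : ∀ᵐ ω ∂μ, ConvexOn ℝ Set.univ (f ω) ∧ Continuous (f ω))
    -- dual integrability: ∃ Y ∈ L¹(μ) with f̃(·, Y, dP/dμ)⁺ ∈ L¹(μ)
    (hdual : ∃ Y : Ω → ℝ, Integrable Y μ ∧ ∃ g : Ω → ℝ, Integrable g μ ∧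
      ∀ᵐ ω ∂μ,
        (⨆ x : ℝ, ((x * Y ω - (P.rnDeriv μ ω).toReal * f ω x : ℝ) : EReal))
          ≤ (g ω : EReal))
    -- primal integrability: E_P[f(·,X₀)⁺] < ∞ for some X₀ ∈ L∞
    (hX0 : ∃ X₀ : Lp ℝ ⊤ μ, ∫⁻ ω, ENNReal.ofReal (max (f ω (X₀ ω)) 0) ∂P < ⊤) :
    (∀ X : Lp ℝ ⊤ μ,
        ⊥ < ((∫⁻ ω, ENNReal.ofReal (max (f ω (X ω)) 0) ∂P : ℝ≥0∞) : EReal)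
          - ((∫⁻ ω, ENNReal.ofReal (max (-(f ω (X ω))) 0) ∂P : ℝ≥0∞) : EReal)) ∧
    (∃ X : Lp ℝ ⊤ μ,
        (((∫⁻ ω, ENNReal.ofReal (max (f ω (X ω)) 0) ∂P : ℝ≥0∞) : EReal)
          - ((∫⁻ ω, ENNReal.ofReal (max (-(f ω (X ω))) 0) ∂P : ℝ≥0∞) : EReal)) < ⊤) ∧
    (∀ X Y : Lp ℝ ⊤ μ, ∀ a b : ℝ, 0 ≤ a → 0 ≤ b → a + b = 1 →
        (((∫⁻ ω, ENNReal.ofReal (max (f ω ((a • X + b • Y : Lp ℝ ⊤ μ) ω)) 0) ∂P : ℝ≥0∞) : EReal)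
          - ((∫⁻ ω, ENNReal.ofReal (max (-(f ω ((a • X + b • Y : Lp ℝ ⊤ μ) ω))) 0) ∂P : ℝ≥0∞) : EReal))
        ≤ (a : EReal) *
            (((∫⁻ ω, ENNReal.ofReal (max (f ω (X ω)) 0) ∂P : ℝ≥0∞) : EReal)
              - ((∫⁻ ω, ENNReal.ofReal (max (-(f ω (X ω))) 0) ∂P : ℝ≥0∞) : EReal))
          + (b : EReal) *
            (((∫⁻ ω, ENNReal.ofReal (max (f ω (Y ω)) 0) ∂P : ℝ≥0∞) : EReal)
              - ((∫⁻ ω, ENNReal.ofReal (max (-(f ω (Y ω))) 0) ∂P : ℝ≥0∞) : EReal))) ∧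
    LowerSemicontinuous (fun X : Lp ℝ ⊤ μ =>
        ((∫⁻ ω, ENNReal.ofReal (max (f ω (X ω)) 0) ∂P : ℝ≥0∞) : EReal)
          - ((∫⁻ ω, ENNReal.ofReal (max (-(f ω (X ω))) 0) ∂P : ℝ≥0∞) : EReal)) := by
  classical
  simp only [IFPCL.ofReal_max_zero] at hX0 ⊢
  obtain ⟨W, hW, g, hg, hWg⟩ := hdual
  set z : Ω → ℝ := fun ω => (P.rnDeriv μ ω).toReal with hzdef
  -- Fenchel inequality
  have hfen : ∀ᵐ ω ∂μ, ∀ x : ℝ, x * W ω - g ω ≤ z ω * f ω x := by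
    filter_upwards [hWg] with ω h x
    have h2 : ((x * W ω - (P.rnDeriv μ ω).toReal * f ω x : ℝ) : EReal) ≤ (g ω : EReal) :=
      le_trans
        (le_iSup (fun x : ℝ => ((x * W ω - (P.rnDeriv μ ω).toReal * f ω x : ℝ) : EReal)) x) h
    rw [EReal.coe_le_coe_iff] at h2
    linarith
  -- measurability
  have hzm : AEMeasurable z μ := (Measure.measurable_rnDeriv P μ).ennreal_toReal.aemeasurable
  have hmX : ∀ X : Lp ℝ ⊤ μ, AEMeasurable (fun ω => f ω (X ω)) μ := fun X =>
    aemeas_comp hmeas (Lp.aestronglyMeasurable X).aemeasurable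
  -- a.e. bound for Lp elements
  have hbd : ∀ X : Lp ℝ ⊤ μ, ∀ᵐ ω ∂μ, |X ω| ≤ ‖X‖ := by
    intro X
    filter_upwards [ae_le_eLpNormEssSup (f := (X : Ω → ℝ)) (μ := μ)] with ω h
    have h2 : (‖X ω‖₊ : ℝ≥0∞) ≤ eLpNorm (X : Ω → ℝ) ⊤ μ := by
      rwa [eLpNorm_exponent_top]
    have h3 := ENNReal.toReal_mono (Lp.eLpNorm_ne_top X) h2
    simpa [Lp.norm_def, Real.norm_eq_abs] using h3
  -- change of measure
  have hchg : ∀ φ : Ω → ℝ, AEMeasurable φ μ →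
      ∫⁻ ω, ENNReal.ofReal (φ ω) ∂P = ∫⁻ ω, ENNReal.ofReal (z ω * φ ω) ∂μ := by
    intro φ hφ
    rw [← MeasureTheory.lintegral_rnDeriv_mul hac
      (f := fun ω => ENNReal.ofReal (φ ω)) (ENNReal.measurable_ofReal.comp_aemeasurable hφ)]
    refine lintegral_congr_ae ?_
    filter_upwards [Measure.rnDeriv_lt_top P μ] with ω h
    rw [ENNReal.ofReal_mul ENNReal.toReal_nonneg]
    congr 1
    exact (ENNReal.ofReal_toReal h.ne).symm
  -- lower bound from Fenchel inequality
  have hlow : ∀ (C : ℝ), 0 ≤ C → ∀ X : Lp ℝ ⊤ μ, ‖X‖ ≤ C →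
      ∀ᵐ ω ∂μ, -(C * |W ω| + |g ω|) ≤ z ω * f ω (X ω) := by
    intro C hC X hXC
    filter_upwards [hfen, hbd X] with ω hf1 hf2
    have h1 := hf1 (X ω)
    have h4 : |X ω| * |W ω| ≤ C * |W ω| :=
      mul_le_mul_of_nonneg_right (hf2.trans hXC) (abs_nonneg _)
    have h5 := neg_abs_le (X ω * W ω)
    rw [abs_mul] at h5
    have h6 := le_abs_self (g ω)
    linarith
  have hInt : ∀ C : ℝ, Integrable (fun ω => C * |W ω| + |g ω|) μ :=
    fun C => (hW.abs.const_mul C).add hg.abs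
  have hIntpos : ∀ C : ℝ, 0 ≤ C → ∀ᵐ ω ∂μ, 0 ≤ C * |W ω| + |g ω| := by
    intro C hC
    filter_upwards with ω
    have := abs_nonneg (W ω)
    have := abs_nonneg (g ω)
    nlinarith
  -- finiteness of negative parts
  have hBfin : ∀ X : Lp ℝ ⊤ μ, ∫⁻ ω, ENNReal.ofReal (-(f ω (X ω))) ∂P ≠ ⊤ := by
    intro X
    have hC : (0 : ℝ) ≤ ‖X‖ := norm_nonneg X
    rw [hchg (fun ω => -(f ω (X ω))) (hmX X).neg]
    have h2 : ∫⁻ ω, ENNReal.ofReal (z ω * -(f ω (X ω))) ∂μ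
        ≤ ∫⁻ ω, ENNReal.ofReal (‖X‖ * |W ω| + |g ω|) ∂μ := by
      refine lintegral_mono_ae ?_
      filter_upwards [hlow ‖X‖ hC X le_rfl] with ω h
      refine ENNReal.ofReal_le_ofReal ?_
      have h7 : z ω * -(f ω (X ω)) = -(z ω * f ω (X ω)) := by ring
      linarith [h]
    exact (h2.trans_lt (hInt ‖X‖).lintegral_lt_top).ne
  refine ⟨fun X => bot_lt_sub (hBfin X), ?_, ?_, ?_⟩
  · -- properness: finite value at X₀
    obtain ⟨X₀, hX₀⟩ := hX0
    exact ⟨X₀, sub_lt_top' hX₀.ne⟩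
  · -- convexity
    intro X Y a b ha hb hab
    rcases eq_or_lt_of_le ha with ha0 | hapos
    · have hb1 : b = 1 := by linarith
      subst hb1
      rw [← ha0]
      simp
    rcases eq_or_lt_of_le hb with hb0 | hbpos
    · have ha1 : a = 1 := by linarith
      subst ha1
      rw [← hb0]
      simp
    by_cases hA : ∫⁻ ω, ENNReal.ofReal (f ω (X ω)) ∂P = ⊤
    · have h1 : ((∫⁻ ω, ENNReal.ofReal (f ω (X ω)) ∂P : ℝ≥0∞) : EReal)
          - ((∫⁻ ω, ENNReal.ofReal (-(f ω (X ω))) ∂P : ℝ≥0∞) : EReal) = ⊤ := by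
        rw [hA, EReal.coe_ennreal_top, coe_ennreal_eq (hBfin X), EReal.top_sub_coe]
      rw [h1, EReal.coe_mul_top_of_pos hapos,
        EReal.top_add_of_ne_bot (mul_ne_bot_of_pos hbpos (bot_lt_sub (hBfin Y)).ne')]
      exact le_top
    by_cases hA' : ∫⁻ ω, ENNReal.ofReal (f ω (Y ω)) ∂P = ⊤
    · have h1 : ((∫⁻ ω, ENNReal.ofReal (f ω (Y ω)) ∂P : ℝ≥0∞) : EReal)
          - ((∫⁻ ω, ENNReal.ofReal (-(f ω (Y ω))) ∂P : ℝ≥0∞) : EReal) = ⊤ := by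
        rw [hA', EReal.coe_ennreal_top, coe_ennreal_eq (hBfin Y), EReal.top_sub_coe]
      rw [h1, EReal.coe_mul_top_of_pos hbpos,
        EReal.add_top_of_ne_bot (mul_ne_bot_of_pos hapos (bot_lt_sub (hBfin X)).ne')]
      exact le_top
    -- finite case
    have hIX : Integrable (fun ω => f ω (X ω)) P :=
      integrable_of_parts ((hmX X).mono_ac hac) hA (hBfin X)
    have hIY : Integrable (fun ω => f ω (Y ω)) P :=
      integrable_of_parts ((hmX Y).mono_ac hac) hA' (hBfin Y)
    have hZae : (((a • X + b • Y : Lp ℝ ⊤ μ) : Ω → ℝ))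
        =ᵐ[μ] fun ω => a * X ω + b * Y ω := by
      filter_upwards [Lp.coeFn_add (a • X) (b • Y), Lp.coeFn_smul a X, Lp.coeFn_smul b Y]
        with ω h1 h2 h3
      rw [h1, Pi.add_apply, h2, h3, Pi.smul_apply, Pi.smul_apply, smul_eq_mul, smul_eq_mul]
    have hconvZ : ∀ᵐ ω ∂μ, f ω ((a • X + b • Y : Lp ℝ ⊤ μ) ω)
        ≤ a * f ω (X ω) + b * f ω (Y ω) := by
      filter_upwards [hZae, hconv] with ω h1 h2
      rw [h1]
      have h3 := h2.1.2 (Set.mem_univ (X ω)) (Set.mem_univ (Y ω)) ha hb hab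
      simpa [smul_eq_mul] using h3
    have hconvZP : ∀ᵐ ω ∂P, f ω ((a • X + b • Y : Lp ℝ ⊤ μ) ω)
        ≤ a * f ω (X ω) + b * f ω (Y ω) := hac.ae_le hconvZ
    have hconst : ∀ (c : ℝ), 0 ≤ c → ∀ (φ : Ω → ℝ),
        ∫⁻ ω, ENNReal.ofReal (c * φ ω) ∂P
          = ENNReal.ofReal c * ∫⁻ ω, ENNReal.ofReal (φ ω) ∂P := by
      intro c hc φ
      rw [← lintegral_const_mul' _ _ ENNReal.ofReal_ne_top]
      exact lintegral_congr fun ω => ENNReal.ofReal_mul hc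
    have hAZ : ∫⁻ ω, ENNReal.ofReal (f ω ((a • X + b • Y : Lp ℝ ⊤ μ) ω)) ∂P ≠ ⊤ := by
      have hle : ∫⁻ ω, ENNReal.ofReal (f ω ((a • X + b • Y : Lp ℝ ⊤ μ) ω)) ∂P
          ≤ ∫⁻ ω, (ENNReal.ofReal (a * f ω (X ω)) + ENNReal.ofReal (b * f ω (Y ω))) ∂P := by
        refine lintegral_mono_ae ?_
        filter_upwards [hconvZP] with ω h
        exact le_trans (ENNReal.ofReal_le_ofReal h) ENNReal.ofReal_add_le
      have heq2 : ∫⁻ ω, (ENNReal.ofReal (a * f ω (X ω)) + ENNReal.ofReal (b * f ω (Y ω))) ∂P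
          = (∫⁻ ω, ENNReal.ofReal (a * f ω (X ω)) ∂P)
            + ∫⁻ ω, ENNReal.ofReal (b * f ω (Y ω)) ∂P :=
        lintegral_add_left'
          (ENNReal.measurable_ofReal.comp_aemeasurable
            (((hmX X).mono_ac hac).const_mul a)) _
      refine ne_top_of_le_ne_top ?_ (hle.trans_eq heq2)
      rw [hconst a ha _, hconst b hb _]
      exact ENNReal.add_ne_top.mpr
        ⟨ENNReal.mul_ne_top ENNReal.ofReal_ne_top hA,
         ENNReal.mul_ne_top ENNReal.ofReal_ne_top hA'⟩
    have hIZ : Integrable (fun ω => f ω ((a • X + b • Y : Lp ℝ ⊤ μ) ω)) P :=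
      integrable_of_parts ((hmX _).mono_ac hac) hAZ (hBfin _)
    rw [F_eq_integral hIZ, F_eq_integral hIX, F_eq_integral hIY,
      ← EReal.coe_mul, ← EReal.coe_mul, ← EReal.coe_add, EReal.coe_le_coe_iff]
    have hle2 : ∫ ω, f ω ((a • X + b • Y : Lp ℝ ⊤ μ) ω) ∂P
        ≤ ∫ ω, (a * f ω (X ω) + b * f ω (Y ω)) ∂P :=
      integral_mono_ae hIZ ((hIX.const_mul a).add (hIY.const_mul b)) hconvZP
    rwa [integral_add (hIX.const_mul a) (hIY.const_mul b), integral_const_mul,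
      integral_const_mul] at hle2
  · -- lower semicontinuity
    intro X y hy
    beta_reduce at hy
    rw [eventually_iff_seq_eventually]
    intro u hu
    beta_reduce
    set C : ℝ := ‖X‖ + 1 with hCdef
    have hC0 : (0 : ℝ) ≤ C := by positivity
    have hXC : ‖X‖ ≤ C := by simp [hCdef]
    set h : Ω → ℝ := fun ω => C * |W ω| + |g ω| with hhdef
    have hhi : Integrable h μ := hInt C
    have hH : ∫⁻ ω, ENNReal.ofReal (h ω) ∂μ ≠ ⊤ := hhi.lintegral_lt_top.ne
    set Hr : ℝ := (∫⁻ ω, ENNReal.ofReal (h ω) ∂μ).toReal with hHrdef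
    -- identity F V = S V - H for ‖V‖ ≤ C
    have hFeq : ∀ V : Lp ℝ ⊤ μ, ‖V‖ ≤ C →
        ((∫⁻ ω, ENNReal.ofReal (f ω (V ω)) ∂P : ℝ≥0∞) : EReal)
          - ((∫⁻ ω, ENNReal.ofReal (-(f ω (V ω))) ∂P : ℝ≥0∞) : EReal)
        = ((∫⁻ ω, ENNReal.ofReal (z ω * f ω (V ω) + h ω) ∂μ : ℝ≥0∞) : EReal)
          - ((∫⁻ ω, ENNReal.ofReal (h ω) ∂μ : ℝ≥0∞) : EReal) := by
      intro V hV
      rw [hchg _ (hmX V), hchg (fun ω => -(f ω (V ω))) (hmX V).neg]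
      have hcongr : ∫⁻ ω, ENNReal.ofReal (z ω * -(f ω (V ω))) ∂μ
          = ∫⁻ ω, ENNReal.ofReal (-(z ω * f ω (V ω))) ∂μ :=
        lintegral_congr fun ω => by rw [mul_neg]
      rw [hcongr]
      exact split_identity (hzm.mul (hmX V)) hhi (hIntpos C hC0) (hlow C hC0 V hV)
    have hψm : ∀ n, AEMeasurable (fun ω => ENNReal.ofReal (z ω * f ω (u n ω) + h ω)) μ :=
      fun n => ENNReal.measurable_ofReal.comp_aemeasurable
        ((hzm.mul (hmX (u n))).add hhi.1.aemeasurable)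
    -- a.e. convergence
    have hae : ∀ᵐ ω ∂μ, ∀ n, |u n ω - X ω| ≤ ‖u n - X‖ := by
      rw [ae_all_iff]
      intro n
      filter_upwards [hbd (u n - X), Lp.coeFn_sub (u n) X] with ω h1 h2
      rw [h2, Pi.sub_apply] at h1
      exact h1
    have hnorm : Tendsto (fun n => ‖u n - X‖) atTop (𝓝 0) := by
      rwa [tendsto_iff_norm_sub_tendsto_zero] at hu
    have hconv2 : ∀ᵐ ω ∂μ, Tendsto (fun n => ENNReal.ofReal (z ω * f ω (u n ω) + h ω)) atTop
        (𝓝 (ENNReal.ofReal (z ω * f ω (X ω) + h ω))) := by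
      filter_upwards [hae, hconv] with ω h1 h2
      have h3 : Tendsto (fun n => u n ω) atTop (𝓝 (X ω)) := by
        rw [tendsto_iff_norm_sub_tendsto_zero]
        exact squeeze_zero_norm (fun n => by simpa [Real.norm_eq_abs] using h1 n) hnorm
      have h4 : Tendsto (fun n => z ω * f ω (u n ω) + h ω) atTop
          (𝓝 (z ω * f ω (X ω) + h ω)) :=
        (((h2.2.tendsto (X ω)).comp h3).const_mul (z ω)).add_const (h ω)
      exact (ENNReal.continuous_ofReal.tendsto _).comp h4
    have hfatou : ∫⁻ ω, ENNReal.ofReal (z ω * f ω (X ω) + h ω) ∂μ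
        ≤ liminf (fun n => ∫⁻ ω, ENNReal.ofReal (z ω * f ω (u n ω) + h ω) ∂μ) atTop := by
      refine le_trans (lintegral_mono_ae ?_) (lintegral_liminf_le' hψm)
      filter_upwards [hconv2] with ω h1
      exact h1.liminf_eq.ge
    have hevC : ∀ᶠ n in atTop, ‖u n‖ ≤ C := by
      have h1 : ∀ᶠ n in atTop, u n ∈ Metric.closedBall X 1 :=
        hu.eventually (Metric.closedBall_mem_nhds X one_pos)
      filter_upwards [h1] with n h2
      rw [Metric.mem_closedBall, dist_eq_norm] at h2
      have h3 : ‖u n‖ ≤ ‖X‖ + ‖u n - X‖ := by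
        calc ‖u n‖ = ‖X + (u n - X)‖ := by rw [add_sub_cancel]
          _ ≤ ‖X‖ + ‖u n - X‖ := norm_add_le _ _
      simp only [hCdef]
      linarith
    rw [hFeq X hXC, coe_ennreal_eq hH, ← hHrdef] at hy
    induction y with
    | bot =>
      exact Eventually.of_forall fun n => bot_lt_sub (hBfin (u n))
    | top => exact absurd hy (by simp)
    | coe r =>
      have hsum : ((r + Hr : ℝ) : EReal)
          < ((∫⁻ ω, ENNReal.ofReal (z ω * f ω (X ω) + h ω) ∂μ : ℝ≥0∞) : EReal) := by
        rw [EReal.coe_add]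
        exact EReal.add_lt_of_lt_sub hy
      rcases lt_or_ge (r + Hr) 0 with hneg | hpos
      · filter_upwards [hevC] with n hn
        rw [hFeq (u n) hn, coe_ennreal_eq hH, ← hHrdef]
        refine lt_sub_real ?_
        refine lt_of_lt_of_le ?_
          (EReal.coe_ennreal_nonneg (∫⁻ ω, ENNReal.ofReal (z ω * f ω (u n ω) + h ω) ∂μ))
        exact_mod_cast hneg
      · set t : ℝ≥0∞ := ENNReal.ofReal (r + Hr) with htdef
        have htc : (t : EReal) = ((r + Hr : ℝ) : EReal) := by
          rw [htdef, EReal.coe_ennreal_ofReal, max_eq_left hpos]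
        have ht : t < liminf (fun n => ∫⁻ ω, ENNReal.ofReal (z ω * f ω (u n ω) + h ω) ∂μ)
            atTop := by
          rw [← EReal.coe_ennreal_lt_coe_ennreal_iff, htc]
          exact lt_of_lt_of_le hsum (EReal.coe_ennreal_le_coe_ennreal_iff.mpr hfatou)
        have hev2 := eventually_lt_of_lt_liminf ht
        filter_upwards [hev2, hevC] with n h1 h2
        rw [hFeq (u n) h2, coe_ennreal_eq hH, ← hHrdef]
        refine lt_sub_real ?_
        rw [← htc]
        exact EReal.coe_ennreal_lt_coe_ennreal_iff.mpr h1
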